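/- Let n be even and positive and let A be a submodule of V with finrank A = n/2. Let r : V⧸A → V and r' : V⧸A^⊥ → V be sections of the quotient maps (so r(c) represents the coset c of A and r'(c') represents the coset c' of A^⊥). Then the family ((c,c') ↦ |A_{r(c), r'(c')}⟩), indexed by (V⧸A) × (V⧸A^⊥), is an orthonormal basis of EuclideanSpace ℂ V. -/

import Mathlib

open scoped BigOperators Kronecker Classical ComplexOrder

noncomputable section

/-- The vector space `F₂ⁿ`. -/
abbrev V (n : ℕ) : Type := Fin n → ZMod 2

/-- The standard bilinear pairing `⟨x,y⟩ = ∑ i, xᵢ * yᵢ` on `F₂ⁿ`. -/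
def pairing {n : ℕ} (x y : V n) : ZMod 2 := ∑ i, x i * y i

/-- `(−1)^b ∈ ℂ` for `b : ZMod 2`. -/
def sign (b : ZMod 2) : ℂ := if b = 0 then 1 else -1

lemma pairing_add_right {n : ℕ} (x y z : V n) :
    pairing x (y + z) = pairing x y + pairing x z := by
  simp [pairing, mul_add, Finset.sum_add_distrib]

lemma pairing_smul_right {n : ℕ} (c : ZMod 2) (x y : V n) :
    pairing x (c • y) = c * pairing x y := by
  simp only [pairing, Pi.smul_apply, smul_eq_mul, Finset.mul_sum]
  exact Finset.sum_congr rfl fun i _ => by ring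

/-- The orthogonal complement `A^⊥ = {y | ∀ a ∈ A, ⟨a,y⟩ = 0}`. -/
def perp {n : ℕ} (A : Submodule (ZMod 2) (V n)) : Submodule (ZMod 2) (V n) where
  carrier := {y | ∀ a ∈ A, pairing a y = 0}
  zero_mem' := by
    simp only [Set.mem_setOf_eq]
    intro a _
    simp [pairing]
  add_mem' := by
    intro y z hy hz
    simp only [Set.mem_setOf_eq] at *
    intro a ha
    rw [pairing_add_right, hy a ha, hz a ha, add_zero]
  smul_mem' := by
    intro c y hy
    simp only [Set.mem_setOf_eq] at *
    intro a ha
    rw [pairing_smul_right, hy a ha, mul_zero]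

/-- The coset `A + s = {a + s : a ∈ A}`. -/
def coset {n : ℕ} (A : Submodule (ZMod 2) (V n)) (s : V n) : Set (V n) :=
  {v | ∃ a ∈ A, v = a + s}

noncomputable instance {n : ℕ} (A : Submodule (ZMod 2) (V n)) : Fintype A :=
  Fintype.ofFinite _

/-- The coset state `|A_{s,s'}⟩ = |A|^{−1/2} ∑_{a ∈ A} (−1)^{⟨a,s'⟩} e_{a+s}`. -/
noncomputable def cosetState {n : ℕ} (A : Submodule (ZMod 2) (V n)) (s s' : V n) :
    EuclideanSpace ℂ (V n) :=
  ((Real.sqrt (Nat.card A) : ℂ))⁻¹ •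
    ∑ a : A, sign (pairing (a : V n) s') • EuclideanSpace.single ((a : V n) + s) (1 : ℂ)

/-- A family of orthogonal projections: each member is Hermitian and idempotent. -/
def IsProjFamily {ι m : Type*} [Fintype m] (P : ι → Matrix m m ℂ) : Prop :=
  ∀ p, (P p).IsHermitian ∧ P p * P p = P p

/-- Coset invariance of a family indexed by pairs `(s, s')`:
the value depends only on the pair of cosets `(A + s, A^⊥ + s')`. -/
def CosetInvariant {n : ℕ} {α : Type*} (A : Submodule (ZMod 2) (V n))
    (F : V n × V n → α) : Prop :=
  ∀ s₁ s₁' s₂ s₂' : V n, coset A s₁ = coset A s₂ →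
    coset (perp A) s₁' = coset (perp A) s₂' → F (s₁, s₁') = F (s₂, s₂')

/-- The rank-one matrix `|A_{s,s'}⟩⟨A_{s,s'}|`. -/
noncomputable def outer {n : ℕ} (A : Submodule (ZMod 2) (V n)) (s s' : V n) :
    Matrix (V n) (V n) ℂ :=
  Matrix.of fun x y => cosetState A s s' x * (starRingEnd ℂ) (cosetState A s s' y)

/-- `Π^A[P,Q] = 2^{−n} ∑_{s,s'} |A_{s,s'}⟩⟨A_{s,s'}| ⊗ P(s,s') ⊗ Q(s,s')`. -/
noncomputable def PiMat {n : ℕ} {I J : Type*} [Fintype I] [Fintype J]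
    (A : Submodule (ZMod 2) (V n)) (P : V n × V n → Matrix I I ℂ)
    (Q : V n × V n → Matrix J J ℂ) : Matrix (V n × I × J) (V n × I × J) ℂ :=
  ((2 : ℂ) ^ n)⁻¹ • ∑ s : V n, ∑ s' : V n, (outer A s s') ⊗ₖ (P (s, s') ⊗ₖ Q (s, s'))

/-- The `ℓ² → ℓ²` operator norm of a complex square matrix. -/
noncomputable def opNorm {m : Type*} [Fintype m] [DecidableEq m] (M : Matrix m m ℂ) : ℝ :=
  ‖Matrix.toEuclideanCLM (𝕜 := ℂ) M‖

namespace CosetAux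

open Finset

variable {n : ℕ}

lemma pairing_comm (x y : V n) : pairing x y = pairing y x := by
  simp [pairing, mul_comm]

lemma pairing_add_left (x y z : V n) :
    pairing (x + y) z = pairing x z + pairing y z := by
  simp [pairing, add_mul, Finset.sum_add_distrib]

lemma pairing_smul_left (c : ZMod 2) (x y : V n) :
    pairing (c • x) y = c • pairing x y := by
  rw [smul_eq_mul, pairing_comm, pairing_smul_right, pairing_comm y x]

lemma zmod2_eq_one {b : ZMod 2} (h : b ≠ 0) : b = 1 := by
  revert b; decide

lemma sign_zero : sign (0 : ZMod 2) = 1 := rfl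

lemma sign_one : sign (1 : ZMod 2) = -1 := by simp [sign]

lemma sign_add (b c : ZMod 2) : sign (b + c) = sign b * sign c := by
  obtain rfl | rfl : b = 0 ∨ b = 1 := by revert b; decide
  all_goals obtain rfl | rfl : c = 0 ∨ c = 1 := by revert c; decide
  all_goals simp [sign, show (1 + 1 : ZMod 2) = 0 from rfl]

lemma sign_sq (b : ZMod 2) : sign b * sign b = 1 := by
  obtain rfl | rfl : b = 0 ∨ b = 1 := by revert b; decide
  all_goals simp [sign]

lemma conj_sign (b : ZMod 2) : (starRingEnd ℂ) (sign b) = sign b := by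
  unfold sign; split <;> simp

/-- Character sum over `A` vanishes when `u ∉ A^⊥`. -/
lemma sum_sign_eq_zero {A : Submodule (ZMod 2) (V n)} {u : V n} (hu : u ∉ perp A) :
    ∑ a : A, sign (pairing (a : V n) u) = 0 := by
  obtain ⟨a₀, ha₀A, ha₀⟩ : ∃ a ∈ A, pairing a u ≠ 0 := by
    by_contra h
    push_neg at h
    exact hu h
  have key : ∑ a : A, sign (pairing ((a + (⟨a₀, ha₀A⟩ : A) : A) : V n) u)
      = ∑ a : A, sign (pairing (a : V n) u) :=
    Equiv.sum_comp (Equiv.addRight (⟨a₀, ha₀A⟩ : A)) (fun a : A => sign (pairing (a : V n) u))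
  have h1 : ∀ a : A, sign (pairing ((a + (⟨a₀, ha₀A⟩ : A) : A) : V n) u)
      = - sign (pairing (a : V n) u) := by
    intro a
    rw [Submodule.coe_add, pairing_add_left, sign_add]
    simp only [zmod2_eq_one ha₀, sign_one]
    ring
  simp only [h1] at key
  rw [Finset.sum_neg_distrib] at key
  have h2 : (2 : ℂ) * ∑ a : A, sign (pairing (a : V n) u) = 0 := by
    linear_combination -key
  simpa using h2

lemma card_A_pos (A : Submodule (ZMod 2) (V n)) : 0 < Nat.card A :=
  Nat.card_pos

/-- The master inner-product formula for coset states. -/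
lemma inner_cosetState (A : Submodule (ZMod 2) (V n)) (s₁ s₁' s₂ s₂' : V n) :
    (inner ℂ (cosetState A s₁ s₁') (cosetState A s₂ s₂') : ℂ) =
      ((Nat.card A : ℂ))⁻¹ * ∑ a : A, ∑ b : A,
        sign (pairing (a : V n) s₁') * sign (pairing (b : V n) s₂') *
          (if (a : V n) + s₁ = (b : V n) + s₂ then 1 else 0) := by
  classical
  unfold cosetState
  rw [inner_smul_left, inner_smul_right, inner_sum]
  simp_rw [sum_inner, inner_smul_left, inner_smul_right,
    EuclideanSpace.inner_single_left, EuclideanSpace.single_apply, map_one, one_mul,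
    conj_sign]
  have hc : (starRingEnd ℂ) (((Real.sqrt (Nat.card A) : ℂ))⁻¹) *
      (((Real.sqrt (Nat.card A) : ℂ))⁻¹) = ((Nat.card A : ℂ))⁻¹ := by
    rw [map_inv₀, Complex.conj_ofReal, ← mul_inv, ← Complex.ofReal_mul,
      Real.mul_self_sqrt (Nat.cast_nonneg _)]
    norm_num
  rw [← mul_assoc, hc]
  congr 1
  rw [Finset.sum_comm]
  refine Finset.sum_congr rfl fun a _ => Finset.sum_congr rfl fun b _ => ?_
  split <;> ring

end CosetAux

/-- Fixing an `n/2`-dimensional subspace `A` and sections of the quotient maps, the family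
of coset states indexed by pairs of cosets is an orthonormal basis of `EuclideanSpace ℂ V`. -/
theorem cosetState_orthonormal_basis
    {n : ℕ} (hn : 0 < n) (hne : Even n)
    (A : Submodule (ZMod 2) (V n)) (hA : Module.finrank (ZMod 2) A = n / 2)
    (r : (V n ⧸ A) → V n)
    (hr : ∀ c : V n ⧸ A, (Submodule.Quotient.mk (r c) : V n ⧸ A) = c)
    (r' : (V n ⧸ perp A) → V n)
    (hr' : ∀ c : V n ⧸ perp A, (Submodule.Quotient.mk (r' c) : V n ⧸ perp A) = c) :
    Orthonormal ℂ
      (fun p : (V n ⧸ A) × (V n ⧸ perp A) => cosetState A (r p.1) (r' p.2)) ∧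
    Submodule.span ℂ
      (Set.range fun p : (V n ⧸ A) × (V n ⧸ perp A) => cosetState A (r p.1) (r' p.2)) = ⊤ := by
  classical
  have hcardA : (Nat.card A : ℂ) ≠ 0 := by
    exact_mod_cast (CosetAux.card_A_pos A).ne'
  have horth : Orthonormal ℂ
      (fun p : (V n ⧸ A) × (V n ⧸ perp A) => cosetState A (r p.1) (r' p.2)) := by
    rw [orthonormal_iff_ite]
    rintro ⟨c, c'⟩ ⟨d, d'⟩
    rw [CosetAux.inner_cosetState]
    by_cases hcd : c = d
    · subst hcd
      by_cases hcd' : c' = d'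
      · subst hcd'
        rw [if_pos rfl]
        have hsum : ∀ a : A, (∑ b : A,
            sign (pairing (a : V n) (r' c')) * sign (pairing (b : V n) (r' c')) *
              (if (a : V n) + r c = (b : V n) + r c then 1 else 0)) = 1 := by
          intro a
          have : ∀ b : A,
              sign (pairing (a : V n) (r' c')) * sign (pairing (b : V n) (r' c')) *
                (if (a : V n) + r c = (b : V n) + r c then 1 else 0) =
              if a = b then
                sign (pairing (a : V n) (r' c')) * sign (pairing (b : V n) (r' c'))
              else 0 := by
            intro b
            simp only [add_left_inj, mul_ite, mul_one, mul_zero, SetLike.coe_eq_coe]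
          simp only [this]
          rw [Finset.sum_ite_eq]
          simp [CosetAux.sign_sq]
        rw [Finset.sum_congr rfl (fun a _ => hsum a)]
        rw [Finset.sum_const, Finset.card_univ, nsmul_eq_mul, mul_one]
        rw [← Nat.card_eq_fintype_card]
        exact inv_mul_cancel₀ hcardA
      · have hne' : r' c' + r' d' ∉ perp A := by
          intro hmem
          apply hcd'
          rw [← hr' c', ← hr' d']
          rw [Submodule.Quotient.eq]
          have : r' c' - r' d' = r' c' + r' d' := by
            rw [sub_eq_add_neg]
            congr 1
            funext i
            exact (CharTwo.neg_eq _)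
          rwa [this]
        have hsum : ∀ a : A, (∑ b : A,
            sign (pairing (a : V n) (r' c')) * sign (pairing (b : V n) (r' d')) *
              (if (a : V n) + r c = (b : V n) + r c then 1 else 0)) =
            sign (pairing (a : V n) (r' c' + r' d')) := by
          intro a
          have : ∀ b : A,
              sign (pairing (a : V n) (r' c')) * sign (pairing (b : V n) (r' d')) *
                (if (a : V n) + r c = (b : V n) + r c then 1 else 0) =
              if a = b then
                sign (pairing (a : V n) (r' c')) * sign (pairing (b : V n) (r' d'))
              else 0 := by
            intro b
            simp only [add_left_inj, mul_ite, mul_one, mul_zero, SetLike.coe_eq_coe]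
          simp only [this]
          rw [Finset.sum_ite_eq]
          simp [pairing_add_right, CosetAux.sign_add]
        rw [Finset.sum_congr rfl (fun a _ => hsum a), CosetAux.sum_sign_eq_zero hne', mul_zero]
        have : ((c, c') : (V n ⧸ A) × (V n ⧸ perp A)) ≠ (c, d') := by
          simp [hcd']
        rw [if_neg this]
    · have hdio : ∀ (a b : A), ((a : V n) + r c = (b : V n) + r d) = False := by
        intro a b
        simp only [eq_iff_iff, iff_false]
        intro h
        apply hcd
        rw [← hr c, ← hr d, Submodule.Quotient.eq]
        have h2 : r c - r d = (b : V n) - (a : V n) := by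
          linear_combination h
        rw [h2]
        exact sub_mem b.2 a.2
      have : ((c, c') : (V n ⧸ A) × (V n ⧸ perp A)) ≠ (d, d') := by
        simp [hcd]
      rw [if_neg this]
      simp only [hdio, if_false, mul_zero, Finset.sum_const_zero]
  refine ⟨horth, ?_⟩
  -- spanning: cardinality count
  haveI : Fintype (V n ⧸ A) := Fintype.ofFinite _
  haveI : Fintype (V n ⧸ perp A) := Fintype.ofFinite _
  obtain ⟨m, hm⟩ := hne
  -- rank of V
  have hrankV : Module.finrank (ZMod 2) (V n) = n := Module.finrank_fin_fun _
  -- the bilinear form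
  let B : LinearMap.BilinForm (ZMod 2) (V n) :=
    LinearMap.mk₂ (ZMod 2) pairing CosetAux.pairing_add_left
      CosetAux.pairing_smul_left
      pairing_add_right pairing_smul_right
  have hBapp : ∀ x y : V n, B x y = pairing x y := fun x y => rfl
  have hB_nd : B.Nondegenerate := by
    refine (LinearMap.IsRefl.nondegenerate_iff_separatingLeft
      (fun x y h => by rw [hBapp] at h ⊢; rwa [CosetAux.pairing_comm])).2 ?_
    intro x hx
    funext i
    have h := hx (Pi.single i 1)
    rw [hBapp] at h
    have : pairing x (Pi.single i 1) = x i := by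
      unfold pairing
      rw [Finset.sum_eq_single i]
      · simp
      · intro j _ hj
        simp [Pi.single_apply, hj]
      · simp
    rw [this] at h
    exact h
  have hB_refl : B.IsRefl := by
    intro x y h
    rw [hBapp] at h ⊢
    rwa [CosetAux.pairing_comm]
  have hperp : perp A = B.orthogonal A := by
    ext y
    constructor
    · intro hy a ha
      exact hy a ha
    · intro hy a ha
      exact hy a ha
  have hrank_perp : Module.finrank (ZMod 2) (perp A) = n - n / 2 := by
    rw [hperp, LinearMap.BilinForm.finrank_orthogonal hB_nd A, hrankV, hA]
  have hq1 : Fintype.card (V n ⧸ A) = 2 ^ (n - n / 2) := by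
    rw [Module.card_eq_pow_finrank (K := ZMod 2), ZMod.card]
    congr 1
    have := Submodule.finrank_quotient_add_finrank A
    rw [hrankV, hA] at this
    omega
  have hq2 : Fintype.card (V n ⧸ perp A) = 2 ^ (n / 2) := by
    rw [Module.card_eq_pow_finrank (K := ZMod 2), ZMod.card]
    congr 1
    have := Submodule.finrank_quotient_add_finrank (perp A)
    rw [hrankV, hrank_perp] at this
    omega
  have hcard : Fintype.card ((V n ⧸ A) × (V n ⧸ perp A)) =
      Module.finrank ℂ (EuclideanSpace ℂ (V n)) := by
    rw [Fintype.card_prod, hq1, hq2, finrank_euclideanSpace, Fintype.card_fun, ZMod.card,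
      Fintype.card_fin, ← pow_add]
    congr 1
    omega
  exact (horth.linearIndependent).span_eq_top_of_card_eq_finrank hcard
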